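/- arXiv:nlin/0101024 — 3 statements merged into one kernel-verified Lean document; each statement's English description precedes it below -/
import Mathlib

section
/- Let κ ∈ C, M ≥ 2, and k ∈ {1, …, M−1}. Set φ = kπ/M, choose r with r² = cos²φ + κ and r + cos φ ≠ 0, and put Δ = e^{iφ}(r + cos φ), Δ* = e^{−iφ}(r + cos φ), Λ = ΔΔ*. Assume Δ ≠ Δ* (i.e., sin φ · (r + cos φ) ≠ 0). Then for the homogeneous classical Lax matrix L(Λ) = [[1 − κ/Λ, −ε/Λ], [1/ε, 0]] one has (L(Λ)^M)₁₂ = 0; that is, B(Λ(φ_k)) = 0, so Λ(φ_k), k = 1,…,M−1, are zeros of the off-diagonal monodromy element. -/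
open Matrix Complex

/-- At the special points `φ = kπ/M`, `k = 1, …, M-1`, the
off-diagonal element of the homogeneous classical monodromy vanishes:
`(L(Λ(φ))^M)₁₂ = 0`, where `L = [[1 - κ/Λ, -ε/Λ],[1/ε, 0]]`,
`Δ = e^{iφ}(r + cos φ)`, `Δ* = e^{-iφ}(r + cos φ)`, `r² = cos²φ + κ`,
`Λ = Δ Δ*`, assuming `r + cos φ ≠ 0` and `Δ ≠ Δ*`. -/
theorem homogeneous_toda_B_zero (κ ε : ℂ) (hε : ε = 1 ∨ ε = -1)
    (M k : ℕ) (hM : 2 ≤ M) (hk1 : 1 ≤ k) (hk2 : k ≤ M - 1)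
    (φ : ℂ) (hφ : φ = (k : ℂ) * (Real.pi : ℂ) / (M : ℂ))
    (r : ℂ) (hr : r ^ 2 = Complex.cos φ ^ 2 + κ)
    (hr0 : r + Complex.cos φ ≠ 0)
    (Δ Δs Λ : ℂ)
    (hΔ : Δ = Complex.exp (Complex.I * φ) * (r + Complex.cos φ))
    (hΔs : Δs = Complex.exp (-(Complex.I * φ)) * (r + Complex.cos φ))
    (hΛ : Λ = Δ * Δs) (hne : Δ ≠ Δs)
    (L : Matrix (Fin 2) (Fin 2) ℂ)
    (hL : L = !![1 - κ / Λ, -ε / Λ; 1 / ε, 0]) :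
    (L ^ M) 0 1 = 0 := by
  have hε0 : ε ≠ 0 := by rcases hε with h | h <;> simp [h]
  have hΔ0 : Δ ≠ 0 := by rw [hΔ]; exact mul_ne_zero (Complex.exp_ne_zero _) hr0
  have hΔs0 : Δs ≠ 0 := by rw [hΔs]; exact mul_ne_zero (Complex.exp_ne_zero _) hr0
  have hΛ0 : Λ ≠ 0 := by rw [hΛ]; exact mul_ne_zero hΔ0 hΔs0
  set a : ℂ := 1 / Δ with ha
  set b : ℂ := 1 / Δs with hb
  have hab : a ≠ b := by
    intro h
    apply hne
    rw [ha, hb, one_div, one_div, _root_.inv_inj, eq_comm] at h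
    exact h.symm
  have hEE : Complex.exp (Complex.I * φ) * Complex.exp (-(Complex.I * φ)) = 1 := by
    rw [← Complex.exp_add]; simp
  have hcos : Complex.exp (Complex.I * φ) + Complex.exp (-(Complex.I * φ))
      = 2 * Complex.cos φ := by
    rw [Complex.two_cos, mul_comm φ Complex.I, neg_mul, mul_comm φ Complex.I]
  have hΛval : Λ = (r + Complex.cos φ) ^ 2 := by
    rw [hΛ, hΔ, hΔs, mul_mul_mul_comm, hEE, one_mul, sq]
  have hsumΔ : Δ + Δs = 2 * Complex.cos φ * (r + Complex.cos φ) := by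
    rw [hΔ, hΔs, ← add_mul, hcos]
  have hκ' : κ = (r + Complex.cos φ) * (r - Complex.cos φ) := by
    linear_combination -hr
  have hsum : a + b = 1 - κ / Λ := by
    rw [ha, hb]
    field_simp
    rw [← hΛ, add_comm Δs Δ, hsumΔ, hΛval, hκ']
    ring
  have hprod : a * b = 1 / Λ := by
    rw [ha, hb, hΛ]
    field_simp
  have hL2 : L * L = (a + b) • L - (a * b) • (1 : Matrix (Fin 2) (Fin 2) ℂ) := by
    rw [hsum, hprod, hL]
    ext i j
    fin_cases i <;> fin_cases j <;>
      simp [Matrix.mul_apply, Fin.sum_univ_two, Matrix.one_apply] <;>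
      ring_nf <;> simp [mul_assoc, mul_inv_cancel₀ hε0]
  have key : ∀ n : ℕ, ∃ f g : ℂ,
      L ^ n = f • L + g • (1 : Matrix (Fin 2) (Fin 2) ℂ) ∧
      (a - b) * f = a ^ n - b ^ n ∧ (a - b) * g = a * b ^ n - a ^ n * b := by
    intro n
    induction n with
    | zero => exact ⟨0, 1, by simp, by ring, by ring⟩
    | succ n ih =>
      obtain ⟨f, g, hrep, hf, hg⟩ := ih
      refine ⟨f * (a + b) + g, -(a * b) * f, ?_, ?_, ?_⟩
      · rw [pow_succ, hrep, add_mul, smul_mul_assoc, smul_mul_assoc, one_mul, hL2]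
        rw [smul_sub, smul_smul, smul_smul]
        module
      · linear_combination (a + b) * hf + hg
      · linear_combination (-(a * b)) * hf
  obtain ⟨f, g, hrep, hf, _⟩ := key M
  have hMne : (M : ℂ) ≠ 0 := Nat.cast_ne_zero.mpr (by omega)
  have hMφ : (M : ℂ) * φ = (k : ℂ) * (Real.pi : ℂ) := by
    rw [hφ]; field_simp
  have hexpM : Complex.exp (Complex.I * φ) ^ M = Complex.exp (-(Complex.I * φ)) ^ M := by
    rw [← Complex.exp_nat_mul, ← Complex.exp_nat_mul]
    have h1 : (M : ℂ) * (Complex.I * φ) = (k : ℂ) * (Real.pi : ℂ) * Complex.I := by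
      rw [mul_comm Complex.I φ, ← mul_assoc, hMφ]
    have h2 : (M : ℂ) * (-(Complex.I * φ)) = -((k : ℂ) * (Real.pi : ℂ) * Complex.I) := by
      rw [mul_neg, mul_comm Complex.I φ, ← mul_assoc, hMφ]
    rw [h1, h2]
    conv_lhs => rw [show (k : ℂ) * (Real.pi : ℂ) * Complex.I =
      -((k : ℂ) * (Real.pi : ℂ) * Complex.I) + (k : ℤ) * (2 * (Real.pi : ℂ) * Complex.I) from by
        push_cast; ring]
    rw [Complex.exp_add, Complex.exp_int_mul_two_pi_mul_I, mul_one]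
  have hpow : a ^ M = b ^ M := by
    rw [ha, hb, div_pow, div_pow, hΔ, hΔs, mul_pow, mul_pow, hexpM]
  have hf0 : f = 0 := by
    have h0 : (a - b) * f = 0 := by rw [hf, hpow]; ring
    exact (mul_eq_zero.mp h0).resolve_left (sub_ne_zero_of_ne hab)
  rw [hrep, hf0]
  simp [Matrix.one_apply]
end

section
/- Let R be a unital ring containing a central invertible element ω^{1/2} (with ω = (ω^{1/2})²) and elements 𝐮 (invertible), 𝐰 with 𝐮𝐰 = ω𝐰𝐮. Let λ_φ, κ_φ be central elements with λ_φ invertible. Then the 2×2 matrix ℓ̃_φ(λ_φ) = [[1 − ω^{1/2}κ_φ𝐰, −ω^{1/2}λ_φ^{−1}(1 − ω^{1/2}κ_φ𝐰)𝐮], [−ω^{1/2}λ_φ 𝐮^{−1}𝐰, 𝐰]] factorizes as the outer product of the column vector (1 − ω^{1/2}κ_φ𝐰, −ω^{1/2}λ_φ 𝐮^{−1}𝐰)ᵀ with the row vector (1, −ω^{1/2}λ_φ^{−1}𝐮). In particular one must use 𝐮^{−1}𝐰𝐮 = ω^{−1}𝐰. -/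
open Matrix

/-- In a unital ring with a central invertible `ω^{1/2}`
(`ω = (ω^{1/2})²`), an invertible `𝐮` and `𝐰` with `𝐮𝐰 = ω𝐰𝐮`, and central
invertible `λ_φ` and central `κ_φ`, the auxiliary Lax matrix at the
degeneration point factorizes as the outer product of the column
`(1 - ω^{1/2}κ_φ𝐰, -ω^{1/2}λ_φ 𝐮⁻¹𝐰)ᵀ` with the row `(1, -ω^{1/2}λ_φ⁻¹𝐮)`;
in particular `𝐮⁻¹𝐰𝐮 = ω⁻¹𝐰`. -/
theorem dst_lax_factorization {R : Type*} [Ring R]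
    (ωh : R) (hωh : ∀ r : R, ωh * r = r * ωh) (hωu : IsUnit ωh)
    (u lphi : Rˣ) (w kphi : R)
    (hlc : ∀ r : R, (lphi : R) * r = r * (lphi : R))
    (hkc : ∀ r : R, kphi * r = r * kphi)
    (hweyl : (u : R) * w = ωh ^ 2 * (w * (u : R)))
    (ℓ : Matrix (Fin 2) (Fin 2) R)
    (hℓ : ℓ = !![1 - ωh * kphi * w, -(ωh * (↑lphi⁻¹ : R) * ((1 - ωh * kphi * w) * (u : R)));
                 -(ωh * (lphi : R) * ((↑u⁻¹ : R) * w)), w]) :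
    ℓ = Matrix.of (fun i j =>
        (![1 - ωh * kphi * w, -(ωh * (lphi : R) * ((↑u⁻¹ : R) * w))] i) *
        (![1, -(ωh * (↑lphi⁻¹ : R) * (u : R))] j)) ∧
    (↑u⁻¹ : R) * w * (u : R) = ((↑hωu.unit⁻¹ : R)) ^ 2 * w := by
  set v : R := (↑hωu.unit⁻¹ : R) with hv
  have hωv : ωh * v = 1 := by
    simpa [hv] using hωu.unit.mul_inv
  have hvω : v * ωh = 1 := by
    simpa [hv] using hωu.unit.inv_mul
  have hvc : ∀ r : R, v * r = r * v := by
    intro r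
    have h1 : v * r = v * r * (ωh * v) := by rw [hωv, mul_one]
    have h2 : v * r * (ωh * v) = v * (r * ωh) * v := by noncomm_ring
    have h3 : v * (r * ωh) * v = v * (ωh * r) * v := by rw [hωh]
    have h4 : v * (ωh * r) * v = (v * ωh) * (r * v) := by noncomm_ring
    rw [h1, h2, h3, h4, hvω, one_mul]
  -- w * u = v^2 * (u * w)
  have hkey : v ^ 2 * ωh ^ 2 = 1 := by
    have : v ^ 2 * ωh ^ 2 = v * (v * ωh) * ωh := by noncomm_ring
    rw [this, hvω, mul_one, hvω]
  have hwu : w * (u : R) = v ^ 2 * ((u : R) * w) := by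
    rw [hweyl, ← mul_assoc, hkey, one_mul]
  have hconj : (↑u⁻¹ : R) * w * (u : R) = v ^ 2 * w := by
    have e1 : (↑u⁻¹ : R) * w * (u : R) = (↑u⁻¹ : R) * (w * (u : R)) := by rw [mul_assoc]
    have e2 : v ^ 2 * (u : R) = (u : R) * v ^ 2 := by
      have : v ^ 2 = v * v := sq v
      rw [this, mul_assoc, hvc, ← mul_assoc, hvc, mul_assoc]
    calc (↑u⁻¹ : R) * w * (u : R) = (↑u⁻¹ : R) * (v ^ 2 * ((u : R) * w)) := by rw [e1, hwu]
    _ = (↑u⁻¹ : R) * (v ^ 2 * (u : R)) * w := by noncomm_ring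
    _ = (↑u⁻¹ : R) * ((u : R) * v ^ 2) * w := by rw [e2]
    _ = ((↑u⁻¹ : R) * (u : R)) * (v ^ 2 * w) := by noncomm_ring
    _ = v ^ 2 * w := by rw [Units.inv_mul, one_mul]
  refine ⟨?_, hconj⟩
  -- centrality of lphi⁻¹
  have hlic : ∀ r : R, (↑lphi⁻¹ : R) * r = r * (↑lphi⁻¹ : R) := by
    intro r
    have h1 : (↑lphi⁻¹ : R) * r = (↑lphi⁻¹ : R) * r * ((lphi : R) * (↑lphi⁻¹ : R)) := by
      rw [Units.mul_inv, mul_one]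
    have h2 : (↑lphi⁻¹ : R) * r * ((lphi : R) * (↑lphi⁻¹ : R))
        = (↑lphi⁻¹ : R) * (r * (lphi : R)) * (↑lphi⁻¹ : R) := by noncomm_ring
    have h3 : r * (lphi : R) = (lphi : R) * r := (hlc r).symm
    rw [h1, h2, h3, ← mul_assoc, Units.inv_mul, one_mul]
  subst hℓ
  ext i j
  fin_cases i <;> fin_cases j <;>
    simp only [Matrix.of_apply, Matrix.cons_val', Matrix.cons_val_zero, Matrix.cons_val_one,
      Matrix.head_cons, Matrix.empty_val', Matrix.cons_val_fin_one, Matrix.head_fin_const,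
      Fin.isValue, Fin.mk_zero, Fin.mk_one, Matrix.vecCons_const]
  · rw [mul_one]
  · rw [mul_neg]
    congr 1
    set A : R := 1 - ωh * kphi * w with hA
    calc ωh * (↑lphi⁻¹ : R) * (A * (u : R))
        = ωh * ((↑lphi⁻¹ : R) * A) * (u : R) := by noncomm_ring
    _ = ωh * (A * (↑lphi⁻¹ : R)) * (u : R) := by rw [hlic]
    _ = (ωh * A) * ((↑lphi⁻¹ : R) * (u : R)) := by noncomm_ring
    _ = (A * ωh) * ((↑lphi⁻¹ : R) * (u : R)) := by rw [hωh]
    _ = A * (ωh * (↑lphi⁻¹ : R) * (u : R)) := by noncomm_ring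
  · rw [mul_one]
  · rw [neg_mul_neg]; symm
    calc ωh * (lphi : R) * ((↑u⁻¹ : R) * w) * (ωh * (↑lphi⁻¹ : R) * (u : R))
        = ωh * (lphi : R) * (((↑u⁻¹ : R) * w) * ωh) * ((↑lphi⁻¹ : R) * (u : R)) := by
          noncomm_ring
    _ = ωh * (lphi : R) * (ωh * ((↑u⁻¹ : R) * w)) * ((↑lphi⁻¹ : R) * (u : R)) := by
          rw [hωh ((↑u⁻¹ : R) * w)]
    _ = ωh * ((lphi : R) * ωh) * (((↑u⁻¹ : R) * w) * ((↑lphi⁻¹ : R) * (u : R))) := by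
          noncomm_ring
    _ = ωh * ((lphi : R) * ωh) * ((↑u⁻¹ : R) * ((↑lphi⁻¹ : R) * w) * (u : R)) := by
          rw [hlic w]; noncomm_ring
    _ = ωh * ((lphi : R) * ωh) * ((↑lphi⁻¹ : R) * ((↑u⁻¹ : R) * w * (u : R))) := by
          rw [show (↑u⁻¹ : R) * ((↑lphi⁻¹ : R) * w) * (u : R)
              = ((↑u⁻¹ : R) * (↑lphi⁻¹ : R)) * (w * (u : R)) from by noncomm_ring,
            ← hlic (↑u⁻¹ : R)]
          noncomm_ring
    _ = ωh * ωh * (((lphi : R) * (↑lphi⁻¹ : R)) * ((↑u⁻¹ : R) * w * (u : R))) := by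
          rw [← hωh (lphi : R)]; noncomm_ring
    _ = ωh * ωh * ((↑u⁻¹ : R) * w * (u : R)) := by rw [Units.mul_inv, one_mul]
    _ = ωh * ωh * (v ^ 2 * w) := by rw [hconj]
    _ = (ωh * (ωh * v) * v) * w := by noncomm_ring
    _ = w := by rw [hωv, mul_one, hωv, one_mul]
end

section
/- Let R be a unital ring with a central invertible element ω^{1/2}, ω = (ω^{1/2})², and elements 𝐮, 𝐰 with 𝐮𝐰 = ω𝐰𝐮. Let λ, μ, κ be central. Define the Toda Lax matrix ℓ(λ) = [[1 + (κ/λ)𝐮𝐰, −(ω^{1/2}/λ)𝐮], [𝐰, 0]] and the 4×4 R-matrix R(λ,μ) with nonzero entries R₁₁ = R₄₄ = λ − ωμ, R₂₂ = λ − μ, R₂₃ = μ(1 − ω), R₃₂ = λ(1 − ω), R₃₃ = ω(λ − μ). Then the intertwining relation R(λ,μ)·(ℓ(λ) ⊗ ℓ(μ)) = (1 ⊗ ℓ(μ))·(ℓ(λ) ⊗ 1)·R(λ,μ) holds, where both sides are 4×4 matrices over R and the tensor factors share the same Weyl elements 𝐮, 𝐰. -/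
open Matrix

set_option maxHeartbeats 4000000 in
/-- The RLL intertwining relation
`R(λ,μ)(ℓ(λ) ⊗ ℓ(μ)) = (1 ⊗ ℓ(μ))(ℓ(λ) ⊗ 1)R(λ,μ)` for the quantum
relativistic Toda Lax matrix `ℓ(λ) = [[1 + (κ/λ)𝐮𝐰, -(ω^{1/2}/λ)𝐮],[𝐰, 0]]`
and the six-vertex R-matrix.  Both sides are written as explicit 4×4 matrices
over the noncommutative ring `R`, the Kronecker products being taken with the
standard index ordering `(i,k) ↦ 2i + k`, both tensor factors sharing the same
Weyl pair `𝐮, 𝐰` with `𝐮𝐰 = ω𝐰𝐮`, `ω = (ω^{1/2})²`. -/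
theorem toda_RLL_relation {R : Type*} [Ring R]
    (ωh ω κ : R) (lu mu : Rˣ) (u w : R)
    (hω : ω = ωh ^ 2)
    (hωhc : ∀ r : R, ωh * r = r * ωh)
    (hκc : ∀ r : R, κ * r = r * κ)
    (hlc : ∀ r : R, (lu : R) * r = r * (lu : R))
    (hmc : ∀ r : R, (mu : R) * r = r * (mu : R))
    (hweyl : u * w = ω * (w * u))
    -- entries of ℓ(λ) and ℓ(μ):
    (a b a' b' c : R)
    (ha : a = 1 + κ * (↑lu⁻¹ : R) * (u * w)) (hb : b = -(ωh * (↑lu⁻¹ : R) * u))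
    (ha' : a' = 1 + κ * (↑mu⁻¹ : R) * (u * w)) (hb' : b' = -(ωh * (↑mu⁻¹ : R) * u))
    (hc : c = w)
    (Rm lKl oneKl lKone : Matrix (Fin 4) (Fin 4) R)
    -- the six-vertex R-matrix:
    (hRm : Rm = !![(lu : R) - ω * (mu : R), 0, 0, 0;
                   0, (lu : R) - (mu : R), (mu : R) * (1 - ω), 0;
                   0, (lu : R) * (1 - ω), ω * ((lu : R) - (mu : R)), 0;
                   0, 0, 0, (lu : R) - ω * (mu : R)])
    -- ℓ(λ) ⊗ ℓ(μ):
    (hlKl : lKl = !![a * a', a * b', b * a', b * b';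
                     a * c, 0, b * c, 0;
                     c * a', c * b', 0, 0;
                     c * c, 0, 0, 0])
    -- 1 ⊗ ℓ(μ):
    (honeKl : oneKl = !![a', b', 0, 0;
                         c, 0, 0, 0;
                         0, 0, a', b';
                         0, 0, c, 0])
    -- ℓ(λ) ⊗ 1:
    (hlKone : lKone = !![a, 0, b, 0;
                         0, a, 0, b;
                         c, 0, 0, 0;
                         0, c, 0, 0]) :
    Rm * lKl = oneKl * lKone * Rm := by
    subst hω ha hb ha' hb' hc hRm hlKl honeKl hlKone
    have cent_ωh := hωhc
    have cent_κ := hκc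
    have cent_L := hlc
    have cent_M := hmc
    have cent_Li : ∀ r : R, (↑lu⁻¹:R) * r = r * ↑lu⁻¹ := by
      intro r
      calc (↑lu⁻¹:R) * r = ↑lu⁻¹ * (r * ↑lu * ↑lu⁻¹) := by rw [Units.mul_inv_cancel_right]
        _ = ↑lu⁻¹ * (↑lu * r * ↑lu⁻¹) := by rw [← cent_L r]
        _ = r * ↑lu⁻¹ := by rw [← mul_assoc, ← mul_assoc, Units.inv_mul, one_mul]
    have cent_Mi : ∀ r : R, (↑mu⁻¹:R) * r = r * ↑mu⁻¹ := by
      intro r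
      calc (↑mu⁻¹:R) * r = ↑mu⁻¹ * (r * ↑mu * ↑mu⁻¹) := by rw [Units.mul_inv_cancel_right]
        _ = ↑mu⁻¹ * (↑mu * r * ↑mu⁻¹) := by rw [← cent_M r]
        _ = r * ↑mu⁻¹ := by rw [← mul_assoc, ← mul_assoc, Units.inv_mul, one_mul]
    have s_κ_ωh : κ * ωh = ωh * κ := cent_κ ωh
    have s_κ_ωh' : ∀ t : R, κ * (ωh * t) = ωh * (κ * t) := fun t => by rw [← mul_assoc, s_κ_ωh, mul_assoc]
    have s_L_ωh : (lu:R) * ωh = ωh * (lu:R) := cent_L ωh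
    have s_L_ωh' : ∀ t : R, (lu:R) * (ωh * t) = ωh * ((lu:R) * t) := fun t => by rw [← mul_assoc, s_L_ωh, mul_assoc]
    have s_Li_ωh : (↑lu⁻¹:R) * ωh = ωh * (↑lu⁻¹:R) := cent_Li ωh
    have s_Li_ωh' : ∀ t : R, (↑lu⁻¹:R) * (ωh * t) = ωh * ((↑lu⁻¹:R) * t) := fun t => by rw [← mul_assoc, s_Li_ωh, mul_assoc]
    have s_M_ωh : (mu:R) * ωh = ωh * (mu:R) := cent_M ωh
    have s_M_ωh' : ∀ t : R, (mu:R) * (ωh * t) = ωh * ((mu:R) * t) := fun t => by rw [← mul_assoc, s_M_ωh, mul_assoc]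
    have s_Mi_ωh : (↑mu⁻¹:R) * ωh = ωh * (↑mu⁻¹:R) := cent_Mi ωh
    have s_Mi_ωh' : ∀ t : R, (↑mu⁻¹:R) * (ωh * t) = ωh * ((↑mu⁻¹:R) * t) := fun t => by rw [← mul_assoc, s_Mi_ωh, mul_assoc]
    have s_L_κ : (lu:R) * κ = κ * (lu:R) := cent_L κ
    have s_L_κ' : ∀ t : R, (lu:R) * (κ * t) = κ * ((lu:R) * t) := fun t => by rw [← mul_assoc, s_L_κ, mul_assoc]
    have s_Li_κ : (↑lu⁻¹:R) * κ = κ * (↑lu⁻¹:R) := cent_Li κ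
    have s_Li_κ' : ∀ t : R, (↑lu⁻¹:R) * (κ * t) = κ * ((↑lu⁻¹:R) * t) := fun t => by rw [← mul_assoc, s_Li_κ, mul_assoc]
    have s_M_κ : (mu:R) * κ = κ * (mu:R) := cent_M κ
    have s_M_κ' : ∀ t : R, (mu:R) * (κ * t) = κ * ((mu:R) * t) := fun t => by rw [← mul_assoc, s_M_κ, mul_assoc]
    have s_Mi_κ : (↑mu⁻¹:R) * κ = κ * (↑mu⁻¹:R) := cent_Mi κ
    have s_Mi_κ' : ∀ t : R, (↑mu⁻¹:R) * (κ * t) = κ * ((↑mu⁻¹:R) * t) := fun t => by rw [← mul_assoc, s_Mi_κ, mul_assoc]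
    have s_Li_L : (↑lu⁻¹:R) * (lu:R) = (lu:R) * (↑lu⁻¹:R) := cent_Li (lu:R)
    have s_Li_L' : ∀ t : R, (↑lu⁻¹:R) * ((lu:R) * t) = (lu:R) * ((↑lu⁻¹:R) * t) := fun t => by rw [← mul_assoc, s_Li_L, mul_assoc]
    have s_M_L : (mu:R) * (lu:R) = (lu:R) * (mu:R) := cent_M (lu:R)
    have s_M_L' : ∀ t : R, (mu:R) * ((lu:R) * t) = (lu:R) * ((mu:R) * t) := fun t => by rw [← mul_assoc, s_M_L, mul_assoc]
    have s_Mi_L : (↑mu⁻¹:R) * (lu:R) = (lu:R) * (↑mu⁻¹:R) := cent_Mi (lu:R)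
    have s_Mi_L' : ∀ t : R, (↑mu⁻¹:R) * ((lu:R) * t) = (lu:R) * ((↑mu⁻¹:R) * t) := fun t => by rw [← mul_assoc, s_Mi_L, mul_assoc]
    have s_M_Li : (mu:R) * (↑lu⁻¹:R) = (↑lu⁻¹:R) * (mu:R) := cent_M (↑lu⁻¹:R)
    have s_M_Li' : ∀ t : R, (mu:R) * ((↑lu⁻¹:R) * t) = (↑lu⁻¹:R) * ((mu:R) * t) := fun t => by rw [← mul_assoc, s_M_Li, mul_assoc]
    have s_Mi_Li : (↑mu⁻¹:R) * (↑lu⁻¹:R) = (↑lu⁻¹:R) * (↑mu⁻¹:R) := cent_Mi (↑lu⁻¹:R)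
    have s_Mi_Li' : ∀ t : R, (↑mu⁻¹:R) * ((↑lu⁻¹:R) * t) = (↑lu⁻¹:R) * ((↑mu⁻¹:R) * t) := fun t => by rw [← mul_assoc, s_Mi_Li, mul_assoc]
    have s_Mi_M : (↑mu⁻¹:R) * (mu:R) = (mu:R) * (↑mu⁻¹:R) := cent_Mi (mu:R)
    have s_Mi_M' : ∀ t : R, (↑mu⁻¹:R) * ((mu:R) * t) = (mu:R) * ((↑mu⁻¹:R) * t) := fun t => by rw [← mul_assoc, s_Mi_M, mul_assoc]
    have s_w_ωh : c * ωh = ωh * c := (cent_ωh c).symm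
    have s_w_ωh' : ∀ t : R, c * (ωh * t) = ωh * (c * t) := fun t => by rw [← mul_assoc, s_w_ωh, mul_assoc]
    have s_u_ωh : u * ωh = ωh * u := (cent_ωh u).symm
    have s_u_ωh' : ∀ t : R, u * (ωh * t) = ωh * (u * t) := fun t => by rw [← mul_assoc, s_u_ωh, mul_assoc]
    have s_w_κ : c * κ = κ * c := (cent_κ c).symm
    have s_w_κ' : ∀ t : R, c * (κ * t) = κ * (c * t) := fun t => by rw [← mul_assoc, s_w_κ, mul_assoc]
    have s_u_κ : u * κ = κ * u := (cent_κ u).symm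
    have s_u_κ' : ∀ t : R, u * (κ * t) = κ * (u * t) := fun t => by rw [← mul_assoc, s_u_κ, mul_assoc]
    have s_w_L : c * (lu:R) = (lu:R) * c := (cent_L c).symm
    have s_w_L' : ∀ t : R, c * ((lu:R) * t) = (lu:R) * (c * t) := fun t => by rw [← mul_assoc, s_w_L, mul_assoc]
    have s_u_L : u * (lu:R) = (lu:R) * u := (cent_L u).symm
    have s_u_L' : ∀ t : R, u * ((lu:R) * t) = (lu:R) * (u * t) := fun t => by rw [← mul_assoc, s_u_L, mul_assoc]
    have s_w_Li : c * (↑lu⁻¹:R) = (↑lu⁻¹:R) * c := (cent_Li c).symm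
    have s_w_Li' : ∀ t : R, c * ((↑lu⁻¹:R) * t) = (↑lu⁻¹:R) * (c * t) := fun t => by rw [← mul_assoc, s_w_Li, mul_assoc]
    have s_u_Li : u * (↑lu⁻¹:R) = (↑lu⁻¹:R) * u := (cent_Li u).symm
    have s_u_Li' : ∀ t : R, u * ((↑lu⁻¹:R) * t) = (↑lu⁻¹:R) * (u * t) := fun t => by rw [← mul_assoc, s_u_Li, mul_assoc]
    have s_w_M : c * (mu:R) = (mu:R) * c := (cent_M c).symm
    have s_w_M' : ∀ t : R, c * ((mu:R) * t) = (mu:R) * (c * t) := fun t => by rw [← mul_assoc, s_w_M, mul_assoc]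
    have s_u_M : u * (mu:R) = (mu:R) * u := (cent_M u).symm
    have s_u_M' : ∀ t : R, u * ((mu:R) * t) = (mu:R) * (u * t) := fun t => by rw [← mul_assoc, s_u_M, mul_assoc]
    have s_w_Mi : c * (↑mu⁻¹:R) = (↑mu⁻¹:R) * c := (cent_Mi c).symm
    have s_w_Mi' : ∀ t : R, c * ((↑mu⁻¹:R) * t) = (↑mu⁻¹:R) * (c * t) := fun t => by rw [← mul_assoc, s_w_Mi, mul_assoc]
    have s_u_Mi : u * (↑mu⁻¹:R) = (↑mu⁻¹:R) * u := (cent_Mi u).symm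
    have s_u_Mi' : ∀ t : R, u * ((↑mu⁻¹:R) * t) = (↑mu⁻¹:R) * (u * t) := fun t => by rw [← mul_assoc, s_u_Mi, mul_assoc]

    have kLLi : (lu:R) * ↑lu⁻¹ = 1 := Units.mul_inv lu
    have kLiL : (↑lu⁻¹:R) * (lu:R) = 1 := Units.inv_mul lu
    have kLLi' : ∀ t : R, (lu:R) * ((↑lu⁻¹:R) * t) = t := fun t => by rw [← mul_assoc, kLLi, one_mul]
    have kLiL' : ∀ t : R, (↑lu⁻¹:R) * ((lu:R) * t) = t := fun t => by rw [← mul_assoc, kLiL, one_mul]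
    have kMMi : (mu:R) * ↑mu⁻¹ = 1 := Units.mul_inv mu
    have kMiM : (↑mu⁻¹:R) * (mu:R) = 1 := Units.inv_mul mu
    have kMMi' : ∀ t : R, (mu:R) * ((↑mu⁻¹:R) * t) = t := fun t => by rw [← mul_assoc, kMMi, one_mul]
    have kMiM' : ∀ t : R, (↑mu⁻¹:R) * ((mu:R) * t) = t := fun t => by rw [← mul_assoc, kMiM, one_mul]
    have wey : u * c = ωh * (ωh * (c * u)) := by
      rw [hweyl, pow_two, mul_assoc]
    have wey' : ∀ t : R, u * (c * t) = ωh * (ωh * (c * (u * t))) := fun t => by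
      rw [← mul_assoc, wey, mul_assoc, mul_assoc, mul_assoc]
    ext i j
    fin_cases i <;> fin_cases j <;>
      simp [Matrix.mul_apply, Fin.sum_univ_four, Matrix.vecHead, Matrix.vecTail,
        Function.comp, -Units.mul_inv, -Units.inv_mul] <;>
      simp only [pow_two, mul_add, add_mul, sub_mul, mul_sub, neg_mul, mul_neg, mul_assoc,
        one_mul, mul_one, zero_mul, mul_zero, add_zero, zero_add, neg_neg, sub_zero, zero_sub,
        wey, wey', s_κ_ωh, s_κ_ωh', s_L_ωh, s_L_ωh', s_Li_ωh, s_Li_ωh', s_M_ωh, s_M_ωh', s_Mi_ωh, s_Mi_ωh', s_L_κ, s_L_κ', s_Li_κ, s_Li_κ', s_M_κ, s_M_κ', s_Mi_κ, s_Mi_κ', s_Li_L, s_Li_L', s_M_L, s_M_L', s_Mi_L, s_Mi_L', s_M_Li, s_M_Li', s_Mi_Li, s_Mi_Li', s_Mi_M, s_Mi_M', s_w_ωh, s_w_ωh', s_u_ωh, s_u_ωh', s_w_κ, s_w_κ', s_u_κ, s_u_κ', s_w_L, s_w_L', s_u_L, s_u_L', s_w_Li, s_w_Li', s_u_Li, s_u_Li',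 s_w_M, s_w_M', s_u_M, s_u_M', s_w_Mi, s_w_Mi', s_u_Mi, s_u_Mi',
        kLLi, kLiL, kLLi', kLiL', kMMi, kMiM, kMMi', kMiM'] <;>
      abel
end
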